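/- Let G be a finite cubic (3-regular) simple graph and let S be a redundant identifying code of G. Then 7·|S| ≥ 4·|V(G)|, i.e., the density of S in G is at least 4/7. -/

import Mathlib

open scoped symmDiff

variable {V : Type*}

/-- The closed neighborhood of a vertex. -/
def closedNbhd (G : SimpleGraph V) (v : V) : Set V := insert v (G.neighborSet v)

/-- A vertex `v` is at least `k`-dominated by `S`. -/
def kDominated (G : SimpleGraph V) (S : Set V) (k : ℕ) (v : V) : Prop :=
  k ≤ (closedNbhd G v ∩ S).ncard

/-- Two vertices `u` and `v` are `k`-distinguished by `S`. -/
def kDistinguished (G : SimpleGraph V) (S : Set V) (k : ℕ) (u v : V) : Prop :=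
  k ≤ ((closedNbhd G u ∩ S) ∆ (closedNbhd G v ∩ S)).ncard

/-- `S` is an identifying code of `G`. -/
def IsIC (G : SimpleGraph V) (S : Set V) : Prop :=
  (∀ v, kDominated G S 1 v) ∧ ∀ u v, u ≠ v → kDistinguished G S 1 u v

/-- `S` is a redundant identifying code of `G`. -/
def IsRedIC (G : SimpleGraph V) (S : Set V) : Prop :=
  (∀ v, kDominated G S 2 v) ∧ ∀ u v, u ≠ v → kDistinguished G S 2 u v

/-- The minimum cardinality of a redundant identifying code of `G`. -/
noncomputable def redIC (G : SimpleGraph V) : ℕ :=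
  sInf {n | ∃ S : Set V, IsRedIC G S ∧ S.ncard = n}

/-- The degree of a vertex, as the cardinality of its open neighborhood. -/
noncomputable def deg (G : SimpleGraph V) (v : V) : ℕ := (G.neighborSet v).ncard

/-- A leaf is a vertex of degree 1. -/
def IsLeaf (G : SimpleGraph V) (v : V) : Prop := deg G v = 1

/-- A support vertex is a vertex adjacent to a leaf. -/
def IsSupport (G : SimpleGraph V) (v : V) : Prop := ∃ u, G.Adj v u ∧ IsLeaf G u

/-- Two distinct vertices are closed twins if they have the same closed neighborhood. -/
def ClosedTwins (G : SimpleGraph V) (u v : V) : Prop :=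
  u ≠ v ∧ closedNbhd G u = closedNbhd G v

theorem stmt_18 {V : Type*} [Fintype V] (G : SimpleGraph V)
    (hcubic : ∀ v : V, deg G v = 3) (S : Set V) (hS : IsRedIC G S) :
    4 * Fintype.card V ≤ 7 * S.ncard := by
  classical
  obtain ⟨hdom, hdis⟩ := hS
  set Nf : V → Finset V := fun v => Finset.univ.filter (fun u => G.Adj v u) with hNf
  set Sfin : Finset V := Finset.univ.filter (fun u => u ∈ S) with hSfin
  set Afin : Finset V := Finset.univ.filter (fun u => u ∉ S) with hAfin
  have hNfmem : ∀ v u, u ∈ Nf v ↔ G.Adj v u := by intro v u; simp [hNf]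
  have hdeg : ∀ v, (Nf v).card = 3 := by
    intro v
    have h1 : G.neighborSet v = ↑(Nf v) := by
      ext u; simp [SimpleGraph.neighborSet, hNf]
    have h2 := hcubic v
    rw [deg, h1, Set.ncard_coe_finset] at h2
    exact h2
  set ns : V → ℕ := fun v => ((Nf v).filter (fun u => u ∈ S)).card with hns
  set na : V → ℕ := fun v => ((Nf v).filter (fun u => u ∉ S)).card with hna
  have hnsna : ∀ v, ns v + na v = 3 := by
    intro v
    simp only [hns, hna]
    rw [Finset.card_filter_add_card_filter_not]
    exact hdeg v
  have hvnot : ∀ v, v ∉ Nf v := by intro v; simp [hNf]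
  have hclosed : ∀ v, closedNbhd G v ∩ S
      = ↑((insert v (Nf v)).filter (fun u => u ∈ S)) := by
    intro v; ext u
    simp only [closedNbhd, Set.mem_inter_iff, Set.mem_insert_iff,
      SimpleGraph.mem_neighborSet, Finset.coe_filter, Finset.mem_insert,
      hNfmem, Set.mem_setOf_eq, Finset.mem_filter, Finset.mem_univ, true_and]
  have hclosedcard : ∀ v, (closedNbhd G v ∩ S).ncard
      = ((insert v (Nf v)).filter (fun u => u ∈ S)).card := by
    intro v; rw [hclosed v, Set.ncard_coe_finset]
  -- domination facts
  have hAdom : ∀ a, a ∉ S → 2 ≤ ns a := by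
    intro a ha
    have h := hdom a
    unfold kDominated at h
    rw [hclosedcard, Finset.filter_insert, if_neg ha] at h
    simp only [hns]
    exact h
  have hSdom : ∀ s, s ∈ S → 1 ≤ ns s := by
    intro s hs
    have h := hdom s
    unfold kDominated at h
    rw [hclosedcard, Finset.filter_insert, if_pos hs,
      Finset.card_insert_of_notMem (fun hc => hvnot s (Finset.mem_of_mem_filter s hc))] at h
    simp only [hns]
    omega
  have hnsle : ∀ v, ns v ≤ 3 := by
    intro v
    simp only [hns]
    calc (Finset.filter (fun u => u ∈ S) (Nf v)).card
        ≤ (Nf v).card := Finset.card_le_card (Finset.filter_subset _ _)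
      _ = 3 := hdeg v
  -- key lemma: if s ∈ S has a unique S-neighbor t, then ns t = 3
  have hkey : ∀ s t, s ∈ S → ((Nf s).filter (fun u => u ∈ S)) = {t} → ns t = 3 := by
    intro s t hsS hts
    have htmem : t ∈ (Nf s).filter (fun u => u ∈ S) := by rw [hts]; exact Finset.mem_singleton_self t
    have hadj : G.Adj s t := (hNfmem s t).mp (Finset.mem_of_mem_filter t htmem)
    have htS : t ∈ S := (Finset.mem_filter.mp htmem).2
    have hne : s ≠ t := hadj.ne
    have hsNt : s ∈ Nf t := (hNfmem t s).mpr hadj.symm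
    set Bt : Finset V := insert t ((Nf t).filter (fun u => u ∈ S)) with hBt
    have hsub : insert s ({t} : Finset V) ⊆ Bt := by
      intro u hu
      rcases Finset.mem_insert.mp hu with rfl | hu
      · exact Finset.mem_insert_of_mem (Finset.mem_filter.mpr ⟨hsNt, hsS⟩)
      · rw [Finset.mem_singleton.mp hu]; exact Finset.mem_insert_self t _
    have hdist := hdis s t hne
    unfold kDistinguished at hdist
    rw [hclosed s, hclosed t] at hdist
    rw [Finset.filter_insert, if_pos hsS, hts] at hdist
    rw [Finset.filter_insert, if_pos htS, ← hBt] at hdist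
    rw [← Finset.coe_symmDiff, Set.ncard_coe_finset] at hdist
    rw [symmDiff_of_le hsub] at hdist
    have hsub2 : Bt \ insert s ({t} : Finset V) ⊆ Nf t \ {s} := by
      intro u hu
      rw [Finset.mem_sdiff] at hu ⊢
      obtain ⟨hu1, hu2⟩ := hu
      rw [Finset.mem_insert, Finset.mem_singleton] at hu2
      push_neg at hu2
      constructor
      · rcases Finset.mem_insert.mp hu1 with rfl | hu1
        · exact absurd rfl hu2.2
        · exact Finset.mem_of_mem_filter u hu1
      · rw [Finset.mem_singleton]; exact hu2.1
    have hcard2 : (Nf t \ {s}).card = 2 := by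
      rw [Finset.card_sdiff_of_subset (Finset.singleton_subset_iff.mpr hsNt), hdeg t,
        Finset.card_singleton]
    have heq : Bt \ insert s ({t} : Finset V) = Nf t \ {s} :=
      Finset.eq_of_subset_of_card_le hsub2 (by omega)
    have hall : ∀ u ∈ Nf t, u ∈ S := by
      intro u hu
      by_cases hus : u = s
      · rw [hus]; exact hsS
      · have humem : u ∈ Bt \ insert s ({t} : Finset V) := by
          rw [heq, Finset.mem_sdiff, Finset.mem_singleton]; exact ⟨hu, hus⟩
        rw [Finset.mem_sdiff] at humem
        obtain ⟨hu1, hu2⟩ := humem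
        rw [Finset.mem_insert, Finset.mem_singleton] at hu2
        push_neg at hu2
        rcases Finset.mem_insert.mp hu1 with rfl | hu1
        · exact absurd rfl hu2.2
        · exact (Finset.mem_filter.mp hu1).2
    have hfe : Finset.filter (fun u => u ∈ S) (Nf t) = Nf t := Finset.filter_eq_self.mpr hall
    simp only [hns]
    rw [hfe]
    exact hdeg t
  -- the map phi from T := {s ∈ S | ns s = 1} to U := {s ∈ S | ns s = 3}
  set phi : V → V := fun s =>
    if h : ∃ t, ((Nf s).filter (fun u => u ∈ S)) = {t} then h.choose else s with hphi
  set T := Sfin.filter (fun s => ns s = 1) with hT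
  set U := Sfin.filter (fun s => ns s = 3) with hU
  have hphiT : ∀ s ∈ T, ((Nf s).filter (fun u => u ∈ S)) = {phi s} := by
    intro s hsT
    have h1 : ns s = 1 := (Finset.mem_filter.mp hsT).2
    have hex : ∃ t, ((Nf s).filter (fun u => u ∈ S)) = {t} := Finset.card_eq_one.mp h1
    simp only [hphi]
    rw [dif_pos hex]
    exact hex.choose_spec
  have hTS : ∀ s ∈ T, s ∈ S := by
    intro s hsT
    have := (Finset.mem_filter.mp hsT).1
    rw [hSfin] at this
    exact (Finset.mem_filter.mp this).2
  have hmapsU : ∀ s ∈ T, phi s ∈ U := by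
    intro s hsT
    have h3 : ns (phi s) = 3 := hkey s (phi s) (hTS s hsT) (hphiT s hsT)
    have hmem : phi s ∈ (Nf s).filter (fun u => u ∈ S) := by
      rw [hphiT s hsT]; exact Finset.mem_singleton_self _
    have hpS : phi s ∈ S := (Finset.mem_filter.mp hmem).2
    rw [hU]
    refine Finset.mem_filter.mpr ⟨?_, h3⟩
    rw [hSfin]; exact Finset.mem_filter.mpr ⟨Finset.mem_univ _, hpS⟩
  have hTU : T.card ≤ 3 * U.card := by
    have h1 : T.card ≤ 3 * (T.image phi).card := by
      apply Finset.card_le_mul_card_image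
      intro t ht
      have hsub : T.filter (fun s => phi s = t) ⊆ (Nf t).filter (fun u => u ∈ S) := by
        intro s hsmem
        obtain ⟨hsT, hst⟩ := Finset.mem_filter.mp hsmem
        have hmem : phi s ∈ (Nf s).filter (fun u => u ∈ S) := by
          rw [hphiT s hsT]; exact Finset.mem_singleton_self _
        have hadj : G.Adj s (phi s) := (hNfmem s _).mp (Finset.mem_of_mem_filter _ hmem)
        rw [hst] at hadj
        exact Finset.mem_filter.mpr ⟨(hNfmem t s).mpr hadj.symm, hTS s hsT⟩
      calc (T.filter (fun s => phi s = t)).card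
          ≤ ((Nf t).filter (fun u => u ∈ S)).card := Finset.card_le_card hsub
        _ ≤ (Nf t).card := Finset.card_le_card (Finset.filter_subset _ _)
        _ = 3 := hdeg t
    have h2 : (T.image phi).card ≤ U.card := by
      apply Finset.card_le_card
      intro t ht
      obtain ⟨s, hsT, rfl⟩ := Finset.mem_image.mp ht
      exact hmapsU s hsT
    omega
  -- sum inequality over Sfin
  have hSsum : 3 * Sfin.card ≤ 2 * ∑ s ∈ Sfin, ns s := by
    set Rr := Sfin.filter (fun s => ns s ≠ 1 ∧ ns s ≠ 3) with hRr
    have hcardsplit : Sfin.card = T.card + U.card + Rr.card := by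
      have h1 : ∀ s ∈ Sfin, (s ∈ T ∨ s ∈ U ∨ s ∈ Rr) := by
        intro s hs
        by_cases h1 : ns s = 1
        · exact Or.inl (Finset.mem_filter.mpr ⟨hs, h1⟩)
        by_cases h3 : ns s = 3
        · exact Or.inr (Or.inl (Finset.mem_filter.mpr ⟨hs, h3⟩))
        · exact Or.inr (Or.inr (Finset.mem_filter.mpr ⟨hs, h1, h3⟩))
      have hunion : Sfin = T ∪ U ∪ Rr := by
        apply Finset.Subset.antisymm
        · intro s hs
          rcases h1 s hs with h | h | h
          · exact Finset.mem_union_left _ (Finset.mem_union_left _ h)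
          · exact Finset.mem_union_left _ (Finset.mem_union_right _ h)
          · exact Finset.mem_union_right _ h
        · intro s hs
          rcases Finset.mem_union.mp hs with h | h
          · rcases Finset.mem_union.mp h with h | h
            · exact (Finset.mem_filter.mp h).1
            · exact (Finset.mem_filter.mp h).1
          · exact (Finset.mem_filter.mp h).1
      have hd1 : Disjoint T U := by
        rw [Finset.disjoint_left]
        intro s hsT hsU
        have := (Finset.mem_filter.mp hsT).2
        have := (Finset.mem_filter.mp hsU).2
        omega
      have hd2 : Disjoint (T ∪ U) Rr := by
        rw [Finset.disjoint_left]
        intro s hs hsR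
        obtain ⟨_, h1, h3⟩ := Finset.mem_filter.mp hsR
        rcases Finset.mem_union.mp hs with h | h
        · exact h1 (Finset.mem_filter.mp h).2
        · exact h3 (Finset.mem_filter.mp h).2
      rw [hunion, Finset.card_union_of_disjoint hd2, Finset.card_union_of_disjoint hd1]
    have hsumsplit : ∑ s ∈ Sfin, ns s
        = ∑ s ∈ T, ns s + ∑ s ∈ U, ns s + ∑ s ∈ Rr, ns s := by
      have h1 : ∀ s ∈ Sfin, (s ∈ T ∨ s ∈ U ∨ s ∈ Rr) := by
        intro s hs
        by_cases h1 : ns s = 1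
        · exact Or.inl (Finset.mem_filter.mpr ⟨hs, h1⟩)
        by_cases h3 : ns s = 3
        · exact Or.inr (Or.inl (Finset.mem_filter.mpr ⟨hs, h3⟩))
        · exact Or.inr (Or.inr (Finset.mem_filter.mpr ⟨hs, h1, h3⟩))
      have hunion : Sfin = T ∪ U ∪ Rr := by
        apply Finset.Subset.antisymm
        · intro s hs
          rcases h1 s hs with h | h | h
          · exact Finset.mem_union_left _ (Finset.mem_union_left _ h)
          · exact Finset.mem_union_left _ (Finset.mem_union_right _ h)
          · exact Finset.mem_union_right _ h
        · intro s hs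
          rcases Finset.mem_union.mp hs with h | h
          · rcases Finset.mem_union.mp h with h | h
            · exact (Finset.mem_filter.mp h).1
            · exact (Finset.mem_filter.mp h).1
          · exact (Finset.mem_filter.mp h).1
      have hd1 : Disjoint T U := by
        rw [Finset.disjoint_left]
        intro s hsT hsU
        have := (Finset.mem_filter.mp hsT).2
        have := (Finset.mem_filter.mp hsU).2
        omega
      have hd2 : Disjoint (T ∪ U) Rr := by
        rw [Finset.disjoint_left]
        intro s hs hsR
        obtain ⟨_, h1', h3⟩ := Finset.mem_filter.mp hsR
        rcases Finset.mem_union.mp hs with h | h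
        · exact h1' (Finset.mem_filter.mp h).2
        · exact h3 (Finset.mem_filter.mp h).2
      rw [hunion, Finset.sum_union hd2, Finset.sum_union hd1]
    have hTsum : ∑ s ∈ T, ns s = T.card := by
      rw [Finset.sum_congr rfl (fun s hs => (Finset.mem_filter.mp hs).2)]
      simp
      rfl
    have hUsum : ∑ s ∈ U, ns s = 3 * U.card := by
      rw [Finset.sum_congr rfl (fun s hs => (Finset.mem_filter.mp hs).2)]
      simp [Nat.mul_comm]
      rfl
    have hRsum : 2 * Rr.card ≤ ∑ s ∈ Rr, ns s := by
      have := Finset.card_nsmul_le_sum Rr ns 2 (fun s hs => by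
        obtain ⟨hsS', h1, h3⟩ := Finset.mem_filter.mp hs
        have hge : 1 ≤ ns s := hSdom s (by
          rw [hSfin] at hsS'; exact (Finset.mem_filter.mp hsS').2)
        have hle := hnsle s
        omega)
      simpa [Nat.mul_comm, smul_eq_mul] using this
    omega
  -- double counting
  have hE : ∑ a ∈ Afin, ns a = ∑ s ∈ Sfin, na s := by
    have h1 : ∀ a, ((Nf a).filter (fun u => u ∈ S)) = Sfin.filter (fun u => G.Adj a u) := by
      intro a; ext u
      simp [hNf, hSfin, and_comm]
    have h2 : ∀ a, ((Nf a).filter (fun u => u ∉ S)) = Afin.filter (fun u => G.Adj a u) := by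
      intro a; ext u
      simp [hNf, hAfin, and_comm]
    calc ∑ a ∈ Afin, ns a
        = ∑ a ∈ Afin, (Sfin.filter (fun u => G.Adj a u)).card := by
          apply Finset.sum_congr rfl; intro a _; simp only [hns]; rw [h1]
      _ = ∑ a ∈ Afin, ∑ u ∈ Sfin, if G.Adj a u then 1 else 0 := by
          apply Finset.sum_congr rfl; intro a _; rw [Finset.card_filter]
      _ = ∑ u ∈ Sfin, ∑ a ∈ Afin, if G.Adj a u then 1 else 0 := Finset.sum_comm
      _ = ∑ u ∈ Sfin, ∑ a ∈ Afin, if G.Adj u a then 1 else 0 := by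
          apply Finset.sum_congr rfl; intro u _
          apply Finset.sum_congr rfl; intro a _
          simp [G.adj_comm]
      _ = ∑ u ∈ Sfin, (Afin.filter (fun a => G.Adj u a)).card := by
          apply Finset.sum_congr rfl; intro u _; rw [Finset.card_filter]
      _ = ∑ s ∈ Sfin, na s := by
          apply Finset.sum_congr rfl; intro u _; simp only [hna]; rw [h2]
  have hAbound : 2 * Afin.card ≤ ∑ a ∈ Afin, ns a := by
    have := Finset.card_nsmul_le_sum Afin ns 2 (fun a ha => hAdom a (by
      rw [hAfin] at ha; exact (Finset.mem_filter.mp ha).2))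
    simpa [Nat.mul_comm, smul_eq_mul] using this
  have hPE : ∑ s ∈ Sfin, ns s + ∑ s ∈ Sfin, na s = 3 * Sfin.card := by
    rw [← Finset.sum_add_distrib]
    rw [Finset.sum_congr rfl (fun s _ => hnsna s)]
    simp [Nat.mul_comm]
  have hcardV : Sfin.card + Afin.card = Fintype.card V := by
    rw [hSfin, hAfin]
    rw [Finset.card_filter_add_card_filter_not]
    exact Finset.card_univ
  have hncard : S.ncard = Sfin.card := by
    have : S = ↑Sfin := by ext u; simp [hSfin]
    rw [this, Set.ncard_coe_finset]
  rw [hncard]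
  omega
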